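/- arXiv:2309.01604 — 2 statements merged into one kernel-verified Lean document; each statement's English description precedes it below -/
import Mathlib

section
/- Suppose the minimum over all paths from w_0 through points w_1,...,w_J to w_{J+1} with g(w) ≤ L of f(w) = Σ_j |w_j - z_j|^p is attained at some w*. If L is strictly less than the length of every tour visiting all z_j (so f(w*) > 0), then g(w*) = L; i.e., the inequality constraint is active at any optimum. -/
noncomputable def pathLen (J : ℕ) (p0 pend : EuclideanSpace ℝ (Fin 2))
    (w : Fin J → EuclideanSpace ℝ (Fin 2)) : ℝ :=
  ∑ j : Fin (J + 1),
    ‖(Fin.cons p0 (Fin.snoc w pend) : Fin (J + 2) → EuclideanSpace ℝ (Fin 2)) j.castSucc -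
      (Fin.cons p0 (Fin.snoc w pend) : Fin (J + 2) → EuclideanSpace ℝ (Fin 2)) j.succ‖

noncomputable def totalEnergy (J : ℕ) (p : ℝ) (z : Fin J → EuclideanSpace ℝ (Fin 2))
    (w : Fin J → EuclideanSpace ℝ (Fin 2)) : ℝ :=
  ∑ j, ‖w j - z j‖ ^ p

lemma pathLen_perturb (J : ℕ) (p0 pend : EuclideanSpace ℝ (Fin 2))
    (w w' : Fin J → EuclideanSpace ℝ (Fin 2)) :
    pathLen J p0 pend w' ≤ pathLen J p0 pend w + 2 * ∑ j, ‖w' j - w j‖ := by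
  set c : Fin (J+2) → EuclideanSpace ℝ (Fin 2) := Fin.cons p0 (Fin.snoc w pend) with hc
  set c' : Fin (J+2) → EuclideanSpace ℝ (Fin 2) := Fin.cons p0 (Fin.snoc w' pend) with hc'
  set D : Fin (J+2) → ℝ := fun i => ‖c' i - c i‖ with hD
  have hD0 : D 0 = 0 := by simp [hD, hc, hc']
  have hDlast : D (Fin.last (J+1)) = 0 := by
    have h1 : c (Fin.last (J+1)) = pend := by
      rw [hc, ← Fin.succ_last, Fin.cons_succ, Fin.snoc_last]
    have h2 : c' (Fin.last (J+1)) = pend := by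
      rw [hc', ← Fin.succ_last, Fin.cons_succ, Fin.snoc_last]
    simp [hD, h1, h2]
  have hT : (∑ i : Fin (J+2), D i) = ∑ j : Fin J, ‖w' j - w j‖ := by
    rw [Fin.sum_univ_succ]
    have : ∀ j : Fin (J+1), D j.succ =
        ‖(Fin.snoc w' pend : Fin (J+1) → EuclideanSpace ℝ (Fin 2)) j -
          (Fin.snoc w pend : Fin (J+1) → EuclideanSpace ℝ (Fin 2)) j‖ := by
      intro j; simp [hD, hc, hc']
    rw [hD0, zero_add, Finset.sum_congr rfl (fun j _ => this j), Fin.sum_univ_castSucc]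
    simp
  have hcast : (∑ j : Fin (J+1), D j.castSucc) = ∑ i : Fin (J+2), D i := by
    rw [Fin.sum_univ_castSucc (f := D), hDlast, add_zero]
  have hsucc : (∑ j : Fin (J+1), D j.succ) = ∑ i : Fin (J+2), D i := by
    rw [Fin.sum_univ_succ (f := D), hD0, zero_add]
  have key : ∀ j : Fin (J+1),
      ‖c' j.castSucc - c' j.succ‖ ≤ ‖c j.castSucc - c j.succ‖ + (D j.castSucc + D j.succ) := by
    intro j
    have e : c' j.castSucc - c' j.succ =
        (c' j.castSucc - c j.castSucc) + ((c j.castSucc - c j.succ) + (c j.succ - c' j.succ)) := by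
      abel
    calc ‖c' j.castSucc - c' j.succ‖
        ≤ ‖c' j.castSucc - c j.castSucc‖ + (‖c j.castSucc - c j.succ‖ + ‖c j.succ - c' j.succ‖) := by
          rw [e]; exact (norm_add_le _ _).trans (by gcongr; exact norm_add_le _ _)
      _ = ‖c j.castSucc - c j.succ‖ + (D j.castSucc + D j.succ) := by
          simp [hD, norm_sub_rev (c j.succ)]; ring
  calc pathLen J p0 pend w' = ∑ j : Fin (J+1), ‖c' j.castSucc - c' j.succ‖ := rfl
    _ ≤ ∑ j : Fin (J+1), (‖c j.castSucc - c j.succ‖ + (D j.castSucc + D j.succ)) :=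
        Finset.sum_le_sum (fun j _ => key j)
    _ = pathLen J p0 pend w + ((∑ j : Fin (J+1), D j.castSucc) + ∑ j : Fin (J+1), D j.succ) := by
        rw [Finset.sum_add_distrib, Finset.sum_add_distrib]; rfl
    _ = pathLen J p0 pend w + 2 * ∑ j, ‖w' j - w j‖ := by
        rw [hcast, hsucc, hT]; ring

theorem stmt_4 (J : ℕ) (p : ℝ) (hp : 0 < p)
    (p0 pend : EuclideanSpace ℝ (Fin 2)) (z : Fin J → EuclideanSpace ℝ (Fin 2))
    (L : ℝ) (hL : ‖p0 - pend‖ < L)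
    (htour : ∀ w : Fin J → EuclideanSpace ℝ (Fin 2), (∀ j, w j = z j) →
      pathLen J p0 pend w > L)
    (wstar : Fin J → EuclideanSpace ℝ (Fin 2))
    (hfeas : pathLen J p0 pend wstar ≤ L)
    (hmin : ∀ w, pathLen J p0 pend w ≤ L → totalEnergy J p z wstar ≤ totalEnergy J p z w) :
    pathLen J p0 pend wstar = L := by
  by_contra hne
  have hlt : pathLen J p0 pend wstar < L := lt_of_le_of_ne hfeas hne
  -- find a coordinate where wstar differs from z
  have hex : ∃ j0, wstar j0 ≠ z j0 := by
    by_contra hall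
    push_neg at hall
    exact absurd (htour wstar hall) (not_lt.mpr hfeas)
  obtain ⟨j0, hj0⟩ := hex
  set d : ℝ := ‖wstar j0 - z j0‖ with hd
  have hdpos : 0 < d := by
    rw [hd, norm_pos_iff]; exact sub_ne_zero_of_ne hj0
  set ε : ℝ := L - pathLen J p0 pend wstar with hε
  have hεpos : 0 < ε := by rw [hε]; linarith
  set t : ℝ := min 1 (ε / (2 * d + 1)) with ht
  have htpos : 0 < t := lt_min one_pos (div_pos hεpos (by linarith))
  have htle1 : t ≤ 1 := min_le_left _ _
  have htle : t ≤ ε / (2 * d + 1) := min_le_right _ _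
  set w' : Fin J → EuclideanSpace ℝ (Fin 2) :=
    Function.update wstar j0 ((1 - t) • wstar j0 + t • z j0) with hw'
  have hw'j0 : w' j0 = (1 - t) • wstar j0 + t • z j0 := Function.update_self _ _ _
  have hdiff : w' j0 - wstar j0 = t • (z j0 - wstar j0) := by
    rw [hw'j0]; module
  have hdiffz : w' j0 - z j0 = (1 - t) • (wstar j0 - z j0) := by
    rw [hw'j0]; module
  have hsum : (∑ j, ‖w' j - wstar j‖) = t * d := by
    rw [Finset.sum_eq_single j0]
    · rw [hdiff, norm_smul, Real.norm_eq_abs, abs_of_pos htpos, norm_sub_rev]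
    · intro j _ hj
      rw [hw', Function.update_of_ne hj, sub_self, norm_zero]
    · intro h; exact absurd (Finset.mem_univ j0) h
  have hfeas' : pathLen J p0 pend w' ≤ L := by
    have h1 := pathLen_perturb J p0 pend wstar w'
    rw [hsum] at h1
    have h2 : 2 * (t * d) ≤ ε := by
      have : t * (2 * d + 1) ≤ ε := by
        rw [← le_div_iff₀ (by linarith : (0:ℝ) < 2 * d + 1)]; exact htle
      nlinarith
    calc pathLen J p0 pend w' ≤ pathLen J p0 pend wstar + 2 * (t * d) := h1
      _ ≤ pathLen J p0 pend wstar + ε := by linarith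
      _ = L := by rw [hε]; ring
  have henergy : totalEnergy J p z w' < totalEnergy J p z wstar := by
    apply Finset.sum_lt_sum
    · intro j _
      rcases eq_or_ne j j0 with rfl | hj
      · apply le_of_lt
        rw [hdiffz, norm_smul, Real.norm_eq_abs,
          abs_of_nonneg (by linarith : (0:ℝ) ≤ 1 - t), ← hd]
        exact Real.rpow_lt_rpow (mul_nonneg (by linarith) hdpos.le)
          (by nlinarith : (1 - t) * d < d) hp
      · rw [hw', Function.update_of_ne hj]
    · refine ⟨j0, Finset.mem_univ j0, ?_⟩
      rw [hdiffz, norm_smul, Real.norm_eq_abs,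
        abs_of_nonneg (by linarith : (0:ℝ) ≤ 1 - t), ← hd]
      exact Real.rpow_lt_rpow (mul_nonneg (by linarith) hdpos.le) (by nlinarith : (1 - t) * d < d) hp
  exact absurd (hmin w' hfeas') (not_le.mpr henergy)
end

section
/- For any w in the constraint set with some |w_j - z_j| > 0 and g(w) < L, there exists δ > 0 such that replacing w_j by w_j + δ(z_j - w_j) yields a point w' with g(w') ≤ L and f(w') < f(w). Hence no point with g(w) < L and f(w) > 0 is a minimizer of f subject to g ≤ L. -/
lemma cont_coord (J : ℕ) (p0 pend : EuclideanSpace ℝ (Fin 2)) (k : Fin (J + 2)) :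
    Continuous fun w : Fin J → EuclideanSpace ℝ (Fin 2) =>
      (Fin.cons p0 (Fin.snoc w pend) : Fin (J + 2) → EuclideanSpace ℝ (Fin 2)) k := by
  induction k using Fin.cases with
  | zero => simpa using continuous_const
  | succ i =>
    simp only [Fin.cons_succ]
    induction i using Fin.lastCases with
    | last => simpa using continuous_const
    | cast m => simpa using continuous_apply m

lemma cont_pathLen (J : ℕ) (p0 pend : EuclideanSpace ℝ (Fin 2)) :
    Continuous (pathLen J p0 pend) := by
  unfold pathLen
  exact continuous_finset_sum _ fun k _ =>
    ((cont_coord J p0 pend k.castSucc).sub (cont_coord J p0 pend k.succ)).norm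

theorem stmt_6 (J : ℕ) (p : ℝ) (hp : 0 < p)
    (p0 pend : EuclideanSpace ℝ (Fin 2)) (z : Fin J → EuclideanSpace ℝ (Fin 2))
    (L : ℝ) (w : Fin J → EuclideanSpace ℝ (Fin 2))
    (hg : pathLen J p0 pend w < L) (j : Fin J) (hj : ‖w j - z j‖ > 0) :
    (∃ δ : ℝ, 0 < δ ∧
      pathLen J p0 pend (Function.update w j (w j + δ • (z j - w j))) ≤ L ∧
      totalEnergy J p z (Function.update w j (w j + δ • (z j - w j))) < totalEnergy J p z w) ∧
    ¬ (∀ w', pathLen J p0 pend w' ≤ L → totalEnergy J p z w ≤ totalEnergy J p z w') := by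
  have hF : Continuous fun δ : ℝ =>
      pathLen J p0 pend (Function.update w j (w j + δ • (z j - w j))) := by
    refine (cont_pathLen J p0 pend).comp ?_
    exact continuous_const.update j (continuous_const.add (continuous_id.smul continuous_const))
  have h0 : (fun δ : ℝ =>
      pathLen J p0 pend (Function.update w j (w j + δ • (z j - w j)))) 0 < L := by
    simp [hg]
  have hev : ∀ᶠ δ : ℝ in nhds 0,
      pathLen J p0 pend (Function.update w j (w j + δ • (z j - w j))) < L :=
    hF.continuousAt.eventually_lt continuousAt_const h0
  rw [Metric.eventually_nhds_iff] at hev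
  obtain ⟨ε, hε, hball⟩ := hev
  set δ : ℝ := min (ε / 2) (1 / 2) with hδdef
  have hδpos : 0 < δ := lt_min (by linarith) (by norm_num)
  have hδlt1 : δ < 1 := lt_of_le_of_lt (min_le_right _ _) (by norm_num)
  have hδε : dist δ 0 < ε := by
    rw [Real.dist_eq, sub_zero, abs_of_pos hδpos]
    exact lt_of_le_of_lt (min_le_left _ _) (by linarith)
  have hpath : pathLen J p0 pend (Function.update w j (w j + δ • (z j - w j))) ≤ L :=
    le_of_lt (hball hδε)
  have hvec : (w j + δ • (z j - w j)) - z j = (1 - δ) • (w j - z j) := by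
    rw [sub_smul, one_smul, smul_sub]
    module
  have henergy : totalEnergy J p z (Function.update w j (w j + δ • (z j - w j)))
      < totalEnergy J p z w := by
    unfold totalEnergy
    apply Finset.sum_lt_sum
    · intro i _
      by_cases hi : i = j
      · subst hi
        rw [Function.update_self, hvec, norm_smul, Real.norm_eq_abs,
          abs_of_pos (by linarith)]
        apply le_of_lt
        apply Real.rpow_lt_rpow (mul_nonneg (by linarith) (norm_nonneg _)) ?_ hp
        nlinarith
      · rw [Function.update_of_ne hi]
    · refine ⟨j, Finset.mem_univ j, ?_⟩
      rw [Function.update_self, hvec, norm_smul, Real.norm_eq_abs,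
        abs_of_pos (by linarith)]
      apply Real.rpow_lt_rpow (mul_nonneg (by linarith) (norm_nonneg _)) ?_ hp
      nlinarith
  refine ⟨⟨δ, hδpos, hpath, henergy⟩, fun hmin => ?_⟩
  exact absurd (hmin _ hpath) (not_le.mpr henergy)
end
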